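/- Let 2 ≤ t ≤ m, fix i ∈ {1,...,m}, and let E_i be the set of t-subsets of {1,...,m} containing i. Assign an independent uniform F_2-valued random variable ξ_e to each e ∈ E_i. Fix j ≠ i and for each e ∈ E_i with j ∉ e define the message F_e = ξ_e + Σ_{k ∈ e \ {i}} ξ_{(e ∪ {j}) \ {k}} (sum over F_2). Then from the collection (F_e : e ∈ E_i, j ∉ e) together with (ξ_e : e ∈ E_i, j ∈ e), one can determine all of (ξ_e : e ∈ E_i); i.e., the map from (ξ_e)_{e ∈ E_i} to ((F_e)_{e: j∉e}, (ξ_e)_{e: j∈e}) is injective (in fact an F_2-linear bijection). -/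
import Mathlib


/-- Party `j` achieves omniscience in the star-hypergraph scheme anchored at `i`:
the values `ξ e` for hyperedges `e` of the star containing `j`, together with the
messages `ξ e + ∑_{k ∈ e \ {i}} ξ ((e ∪ {j}) \ {k})` for hyperedges not containing `j`,
determine all the values `ξ e`, `e ∈ E_i`. -/
theorem stmt7 (m t : ℕ) (h2 : 2 ≤ t) (htm : t ≤ m) (i j : Fin m) (hij : j ≠ i)
    (ξ ξ' : Finset (Fin m) → ZMod 2)
    (hknown : ∀ e : Finset (Fin m), e.card = t → i ∈ e → j ∈ e → ξ e = ξ' e)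
    (hmsg : ∀ e : Finset (Fin m), e.card = t → i ∈ e → j ∉ e →
      ξ e + ∑ k ∈ e.erase i, ξ ((insert j e).erase k)
        = ξ' e + ∑ k ∈ e.erase i, ξ' ((insert j e).erase k)) :
    ∀ e : Finset (Fin m), e.card = t → i ∈ e → ξ e = ξ' e := by
  intro e hcard hie
  by_cases hje : j ∈ e
  · exact hknown e hcard hie hje
  · have hsum : ∑ k ∈ e.erase i, ξ ((insert j e).erase k)
        = ∑ k ∈ e.erase i, ξ' ((insert j e).erase k) := by
      refine Finset.sum_congr rfl fun k hk => ?_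
      have hke : k ∈ e := Finset.mem_of_mem_erase hk
      have hki : k ≠ i := Finset.ne_of_mem_erase hk
      refine hknown _ ?_ ?_ ?_
      · rw [Finset.card_erase_of_mem (Finset.mem_insert_of_mem hke),
          Finset.card_insert_of_notMem hje, hcard]; rfl
      · exact Finset.mem_erase.2 ⟨Ne.symm hki, Finset.mem_insert_of_mem hie⟩
      · exact Finset.mem_erase.2 ⟨fun h => hje (h ▸ hke), Finset.mem_insert_self _ _⟩
    have := hmsg e hcard hie hje
    rw [hsum] at this
    exact add_right_cancel this
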